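/- Suppose ≿_s^J is a linear order for all J with |J| ≤ q_s − 1 and each school s, ≿_s satisfies PD and WO, and C_s is consistent with ≿_s for all s. Then a matching μ is C-stable if and only if μ is stable. -/
import Mathlib


open Finset

variable {I T S : Type*}

/-- `a` (a student or the null student `none`) is not a member of `J`. -/
def NotInOpt (a : Option I) (J : Finset I) : Prop := ∀ i ∈ a, i ∉ J

/-- Strict part `≻` of the weak priority order `ge = ≿`. -/
def StrictP (ge : Finset I → Option I → Option I → Prop) (J : Finset I) (a b : Option I) :
    Prop :=
  ge J a b ∧ ¬ ge J b a

/-- Symmetric part `∼` of the weak priority order `ge = ≿`. -/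
def SimP (ge : Finset I → Option I → Option I → Prop) (J : Finset I) (a b : Option I) :
    Prop :=
  ge J a b ∧ ge J b a

/-- `tcnt τ J a` = number of students in `J` of the same type as `a` (0 for the null student). -/
def tcnt [DecidableEq T] (τ : I → T) (J : Finset I) : Option I → ℕ
  | none => 0
  | some i => (J.filter fun x => τ x = τ i).card

/-- Completeness of each `≿ₛᴶ` on `(I∖J) ∪ {∅}`. -/
def CompleteP (q : ℕ) (ge : Finset I → Option I → Option I → Prop) : Prop :=
  ∀ J : Finset I, J.card < q → ∀ a b : Option I, NotInOpt a J → NotInOpt b J →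
    ge J a b ∨ ge J b a

/-- Transitivity of each `≿ₛᴶ` on `(I∖J) ∪ {∅}`. -/
def TransP (q : ℕ) (ge : Finset I → Option I → Option I → Prop) : Prop :=
  ∀ J : Finset I, J.card < q → ∀ a b c : Option I,
    NotInOpt a J → NotInOpt b J → NotInOpt c J → ge J a b → ge J b c → ge J a c

/-- Antisymmetry of each `≿ₛᴶ` (so that it is a linear order). -/
def AntisymP (q : ℕ) (ge : Finset I → Option I → Option I → Prop) : Prop :=
  ∀ J : Finset I, J.card < q → ∀ a b : Option I, NotInOpt a J → NotInOpt b J →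
    ge J a b → ge J b a → a = b

/-- PD (preference for diversity). -/
def PD [DecidableEq T] (τ : I → T) (q : ℕ)
    (ge : Finset I → Option I → Option I → Prop) : Prop :=
  ∀ J J' : Finset I, ∀ a b : Option I,
    J.card < q → J'.card < q →
    NotInOpt a J → NotInOpt b J → NotInOpt a J' → NotInOpt b J' →
    tcnt τ J' a ≤ tcnt τ J a → tcnt τ J b ≤ tcnt τ J' b →
    (StrictP ge J a b → StrictP ge J' a b) ∧ (ge J a b → ge J' a b)

/-- WO (within-type ordering). -/
def WO [DecidableEq T] (τ : I → T) (q : ℕ)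
    (ge : Finset I → Option I → Option I → Prop) : Prop :=
  ∀ J J' : Finset I, ∀ i j : I,
    J.card < q → J'.card < q →
    i ∉ J → j ∉ J → i ∉ J' → j ∉ J' → τ i = τ j →
    (StrictP ge J (some i) (some j) → StrictP ge J' (some i) (some j)) ∧
    (ge J (some i) (some j) → ge J' (some i) (some j))

/-- DC (distributional consistency of WO). -/
def DC [DecidableEq I] [DecidableEq T] (τ : I → T) (q : ℕ)
    (ge : Finset I → Option I → Option I → Prop) : Prop :=
  ∀ J : Finset I, ∀ i j : I, ∀ k : Option I,
    J.card + 1 < q → i ≠ j → i ∉ J → j ∉ J → NotInOpt k J →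
    k ≠ some i → k ≠ some j → τ i = τ j → ge J (some i) (some j) →
    (StrictP ge (insert i J) (some j) k → StrictP ge (insert j J) (some i) k) ∧
    (SimP ge (insert i J) (some j) k → SimP ge (insert j J) (some i) k) ∧
    (StrictP ge (insert i J) k (some j) → StrictP ge (insert j J) k (some i))

/-- The choice function `C` is consistent with the priority profile `ge = ≿ₛ`. -/
def ConsistentP [DecidableEq I] (q : ℕ)
    (ge : Finset I → Option I → Option I → Prop) (C : Finset I → Finset I) : Prop :=
  ∀ J : Finset I,
    (∀ i ∈ C J,
      (∀ j ∈ J \ C J, ge ((C J).erase i) (some i) (some j)) ∧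
        ge ((C J).erase i) (some i) none) ∧
    ((C J).card < q → (C J).card < J.card →
      ∀ j ∈ J \ C J, StrictP ge (C J) none (some j))

/-- `C` is substitutable. -/
def SubstitutableP [DecidableEq I] (C : Finset I → Finset I) : Prop :=
  ∀ (J : Finset I) (i j : I), j ∉ J → i ∈ C (insert j J) → i ∈ C J

/-- The set of students assigned to school `s` under the matching `μ`. -/
def assignedTo [Fintype I] [DecidableEq I] [DecidableEq S]
    (μ : I → Option S) (s : S) : Finset I :=
  Finset.univ.filter fun i => μ i = some s

/-- Weak preference `R_i` induced by the strict preference `P_i`. -/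
def Rpref (P : I → Option S → Option S → Prop) (i : I) (a b : Option S) : Prop :=
  P i a b ∨ a = b

/-- `μ` is non-wasteful. -/
def NonWastefulM [Fintype I] [DecidableEq I] [DecidableEq S] (q : S → ℕ)
    (ge : S → Finset I → Option I → Option I → Prop)
    (P : I → Option S → Option S → Prop) (μ : I → Option S) : Prop :=
  ∀ i s, P i (some s) (μ i) →
    StrictP (ge s) (assignedTo μ s) none (some i) ∨ (assignedTo μ s).card = q s

/-- `μ` is individually rational. -/
def IndRationalM [Fintype I] [DecidableEq I] [DecidableEq S]
    (ge : S → Finset I → Option I → Option I → Prop)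
    (P : I → Option S → Option S → Prop) (μ : I → Option S) : Prop :=
  (∀ i, Rpref P i (μ i) none) ∧
    ∀ s, ∀ i ∈ assignedTo μ s, ge s ((assignedTo μ s).erase i) (some i) none

/-- `μ` is fair: no student has justified envy. -/
def FairM [Fintype I] [DecidableEq I] [DecidableEq S]
    (ge : S → Finset I → Option I → Option I → Prop)
    (P : I → Option S → Option S → Prop) (μ : I → Option S) : Prop :=
  ¬ ∃ i j s, μ j = some s ∧ P i (some s) (μ i) ∧
      StrictP (ge s) ((assignedTo μ s).erase j) (some i) (some j)

/-- `μ` is stable. -/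
def StableM [Fintype I] [DecidableEq I] [DecidableEq S] (q : S → ℕ)
    (ge : S → Finset I → Option I → Option I → Prop)
    (P : I → Option S → Option S → Prop) (μ : I → Option S) : Prop :=
  NonWastefulM q ge P μ ∧ IndRationalM ge P μ ∧ FairM ge P μ

/-- `μ` is `C`-stable. -/
def CStableM [Fintype I] [DecidableEq I] [DecidableEq S]
    (C : S → Finset I → Finset I)
    (P : I → Option S → Option S → Prop) (μ : I → Option S) : Prop :=
  (∀ i, Rpref P i (μ i) none) ∧
    (∀ s, assignedTo μ s = C s (assignedTo μ s)) ∧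
    ¬ ∃ s i, μ i ≠ some s ∧ P i (some s) (μ i) ∧ i ∈ C s (insert i (assignedTo μ s))


section Helpers

variable {I T : Type*}

lemma notInOpt_none {J : Finset I} : NotInOpt (none : Option I) J := by
  intro x hx; simp at hx

lemma notInOpt_some {j : I} {J : Finset I} (h : j ∉ J) : NotInOpt (some j) J := by
  intro x hx
  simp only [Option.mem_def, Option.some.injEq] at hx
  subst hx; exact h

lemma tcnt_mono [DecidableEq T] (τ : I → T) {A B : Finset I} (h : A ⊆ B) (a : Option I) :
    tcnt τ A a ≤ tcnt τ B a := by
  cases a with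
  | none => simp [tcnt]
  | some i => exact Finset.card_le_card (Finset.filter_subset_filter _ h)

lemma strict_of_ge {q : ℕ} {ge : Finset I → Option I → Option I → Prop}
    (hanti : AntisymP q ge) {J : Finset I} {a b : Option I}
    (hJ : J.card < q) (ha : NotInOpt a J) (hb : NotInOpt b J) (hab : a ≠ b)
    (h : ge J a b) : StrictP ge J a b :=
  ⟨h, fun h' => hab (hanti J hJ a b ha hb h h')⟩

/-- Key transfer lemma: a strict `∅ ≻ j` in a subcontext contradicts `j ≿ ∅` in a
supercontext, by PD. -/
lemma key_transfer [DecidableEq T] (τ : I → T) {q : ℕ}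
    {ge : Finset I → Option I → Option I → Prop} (hPD : PD τ q ge)
    {A B : Finset I} {j : I} (hAB : A ⊆ B) (hjB : j ∉ B)
    (hA : A.card < q) (hB : B.card < q)
    (h1 : StrictP ge A none (some j)) (h2 : ge B (some j) none) : False := by
  have hjA : j ∉ A := fun h => hjB (hAB h)
  have hstr := (hPD A B none (some j) hA hB notInOpt_none (notInOpt_some hjA)
    notInOpt_none (notInOpt_some hjB) (by simp [tcnt]) (tcnt_mono τ hAB _)).1 h1
  exact hstr.2 h2

end Helpers

/-- **Lemma 6.** If every `≿ₛᴶ` is a linear order, `≿ₛ` satisfies PD and WO, and each `Cₛ` is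
consistent with `≿ₛ`, then a matching is `C`-stable iff it is stable. -/
theorem lemma6 [Fintype I] [DecidableEq I] [DecidableEq T] [DecidableEq S]
    (τ : I → T) (q : S → ℕ)
    (ge : S → Finset I → Option I → Option I → Prop)
    (hcomp : ∀ s, CompleteP (q s) (ge s)) (htr : ∀ s, TransP (q s) (ge s))
    (hanti : ∀ s, AntisymP (q s) (ge s))
    (hPD : ∀ s, PD τ (q s) (ge s)) (hWO : ∀ s, WO τ (q s) (ge s))
    (C : S → Finset I → Finset I)
    (hsub : ∀ s J, C s J ⊆ J) (hcardC : ∀ s J, (C s J).card ≤ q s)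
    (hcons : ∀ s, ConsistentP (q s) (ge s) (C s))
    (P : I → Option S → Option S → Prop)
    (hPasym : ∀ i a b, P i a b → ¬ P i b a)
    (hPtrans : ∀ i a b c, P i a b → P i b c → P i a c)
    (hPtotal : ∀ i a b, a ≠ b → P i a b ∨ P i b a)
    (μ : I → Option S) (hcap : ∀ s, (assignedTo μ s).card ≤ q s) :
    CStableM C P μ ↔ StableM q ge P μ := by
  constructor
  · -- C-stable → stable
    rintro ⟨hIR1, hFix, hNB⟩
    have hIR2 : ∀ s, ∀ i ∈ assignedTo μ s,
        ge s ((assignedTo μ s).erase i) (some i) none := by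
      intro s i hi
      have hi' : i ∈ C s (assignedTo μ s) := by rw [← hFix s]; exact hi
      have h := ((hcons s) (assignedTo μ s)).1 i hi'
      rw [hFix s]
      exact h.2
    refine ⟨?_, ⟨hIR1, hIR2⟩, ?_⟩
    · -- non-wasteful
      intro i s hP
      rcases (hcap s).lt_or_eq with hlt | heq
      · left
        have hne : μ i ≠ some s := by
          intro h; rw [h] at hP; exact hPasym i _ _ hP hP
        have hiM : i ∉ assignedTo μ s := by
          simp only [assignedTo, Finset.mem_filter, Finset.mem_univ, true_and]
          exact hne
        have hiC : i ∉ C s (insert i (assignedTo μ s)) := by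
          intro hmem; exact hNB ⟨s, i, hne, hP, hmem⟩
        have hsubM : C s (insert i (assignedTo μ s)) ⊆ assignedTo μ s := by
          intro x hx
          have hx' := hsub s _ hx
          rcases Finset.mem_insert.1 hx' with rfl | h
          · exact absurd hx hiC
          · exact h
        have hcC : (C s (insert i (assignedTo μ s))).card < q s :=
          lt_of_le_of_lt (Finset.card_le_card hsubM) hlt
        have hcJ : (C s (insert i (assignedTo μ s))).card
            < (insert i (assignedTo μ s)).card := by
          rw [Finset.card_insert_of_notMem hiM]
          exact lt_of_le_of_lt (Finset.card_le_card hsubM) (Nat.lt_succ_self _)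
        have hstr := ((hcons s) (insert i (assignedTo μ s))).2 hcC hcJ i
          (Finset.mem_sdiff.2 ⟨Finset.mem_insert_self _ _, hiC⟩)
        have hiC' : i ∉ C s (insert i (assignedTo μ s)) := hiC
        exact (hPD s _ _ none (some i) hcC hlt notInOpt_none (notInOpt_some hiC')
          notInOpt_none (notInOpt_some hiM) (by simp [tcnt])
          (tcnt_mono τ hsubM _)).1 hstr
      · exact Or.inr heq
    · -- fair
      rintro ⟨i, j, s, hjs, hP, henvy⟩
      have hne : μ i ≠ some s := by
        intro h; rw [h] at hP; exact hPasym i _ _ hP hP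
      have hiM : i ∉ assignedTo μ s := by
        simp only [assignedTo, Finset.mem_filter, Finset.mem_univ, true_and]
        exact hne
      have hjM : j ∈ assignedTo μ s := by
        simp only [assignedTo, Finset.mem_filter, Finset.mem_univ, true_and]
        exact hjs
      have hiC : i ∉ C s (insert i (assignedTo μ s)) := by
        intro hmem; exact hNB ⟨s, i, hne, hP, hmem⟩
      have hsubM : C s (insert i (assignedTo μ s)) ⊆ assignedTo μ s := by
        intro x hx
        have hx' := hsub s _ hx
        rcases Finset.mem_insert.1 hx' with rfl | h
        · exact absurd hx hiC
        · exact h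
      by_cases hCeq : C s (insert i (assignedTo μ s)) = assignedTo μ s
      · have hjC : j ∈ C s (insert i (assignedTo μ s)) := by
          rw [hCeq]; exact hjM
        have h := (((hcons s) (insert i (assignedTo μ s))).1 j hjC).1 i
          (Finset.mem_sdiff.2 ⟨Finset.mem_insert_self _ _, hiC⟩)
        rw [hCeq] at h
        exact henvy.2 h
      · have hss : C s (insert i (assignedTo μ s)) ⊂ assignedTo μ s :=
          lt_of_le_of_ne hsubM hCeq
        obtain ⟨j0, hj0M, hj0C⟩ := Finset.exists_of_ssubset hss
        have hMq : 1 ≤ (assignedTo μ s).card := Finset.card_pos.2 ⟨j0, hj0M⟩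
        have hcC : (C s (insert i (assignedTo μ s))).card < q s :=
          lt_of_lt_of_le (Finset.card_lt_card hss) (hcap s)
        have hcJ : (C s (insert i (assignedTo μ s))).card
            < (insert i (assignedTo μ s)).card := by
          rw [Finset.card_insert_of_notMem hiM]
          exact lt_of_lt_of_le (Finset.card_lt_card hss) (Nat.le_succ _)
        have hstr := ((hcons s) (insert i (assignedTo μ s))).2 hcC hcJ j0
          (Finset.mem_sdiff.2 ⟨Finset.mem_insert_of_mem hj0M, hj0C⟩)
        have hge := hIR2 s j0 hj0M
        refine key_transfer τ (hPD s) ?_ (Finset.notMem_erase _ _) hcC ?_ hstr hge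
        · intro x hx
          exact Finset.mem_erase.2 ⟨fun h => hj0C (h ▸ hx), hsubM hx⟩
        · rw [Finset.card_erase_of_mem hj0M]
          have := hcap s
          omega
  · -- stable → C-stable
    rintro ⟨hNW, ⟨hIR1, hIR2⟩, hFair⟩
    refine ⟨hIR1, ?_, ?_⟩
    · -- fixed point
      intro s
      by_contra hne
      have hss : C s (assignedTo μ s) ⊂ assignedTo μ s :=
        lt_of_le_of_ne (hsub s _) (fun h => hne h.symm)
      obtain ⟨j, hjM, hjC⟩ := Finset.exists_of_ssubset hss
      have hcC : (C s (assignedTo μ s)).card < q s :=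
        lt_of_lt_of_le (Finset.card_lt_card hss) (hcap s)
      have hstr := ((hcons s) (assignedTo μ s)).2 hcC (Finset.card_lt_card hss) j
        (Finset.mem_sdiff.2 ⟨hjM, hjC⟩)
      have hge := hIR2 s j hjM
      refine key_transfer τ (hPD s) ?_ (Finset.notMem_erase _ _) hcC ?_ hstr hge
      · intro x hx
        exact Finset.mem_erase.2 ⟨fun h => hjC (h ▸ hx), (hsub s _) hx⟩
      · rw [Finset.card_erase_of_mem hjM]
        have h1 : 1 ≤ (assignedTo μ s).card := Finset.card_pos.2 ⟨j, hjM⟩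
        have h2 := hcap s
        omega
    · -- no blocking pair
      rintro ⟨s, i, hne, hP, hiC⟩
      have hiM : i ∉ assignedTo μ s := by
        simp only [assignedTo, Finset.mem_filter, Finset.mem_univ, true_and]
        exact hne
      have hcons1 := ((hcons s) (insert i (assignedTo μ s))).1 i hiC
      have hCpos : 1 ≤ (C s (insert i (assignedTo μ s))).card :=
        Finset.card_pos.2 ⟨i, hiC⟩
      have hqpos : 1 ≤ q s := le_trans hCpos (hcardC s _)
      have hCerase : ((C s (insert i (assignedTo μ s))).erase i).card < q s := by
        rw [Finset.card_erase_of_mem hiC]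
        have := hcardC s (insert i (assignedTo μ s))
        omega
      by_cases hCJ : C s (insert i (assignedTo μ s)) = insert i (assignedTo μ s)
      · -- everyone chosen: contradicts non-wastefulness
        have hMlt : (assignedTo μ s).card < q s := by
          have h1 := hcardC s (insert i (assignedTo μ s))
          rw [hCJ, Finset.card_insert_of_notMem hiM] at h1
          omega
        have hge : ge s (assignedTo μ s) (some i) none := by
          have h := hcons1.2
          rwa [hCJ, Finset.erase_insert hiM] at h
        rcases hNW i s hP with hstr | hcard
        · exact hstr.2 hge
        · omega
      · -- some student in μ(s) rejected: justified envy
        have hss : C s (insert i (assignedTo μ s)) ⊂ insert i (assignedTo μ s) :=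
          lt_of_le_of_ne (hsub s _) hCJ
        -- choose the rejected student j: same type as i if possible
        have hmain : ∀ j, j ∈ assignedTo μ s → j ∉ C s (insert i (assignedTo μ s)) →
            ge s (((C s (insert i (assignedTo μ s))).erase i)) (some i) (some j) →
            ge s ((assignedTo μ s).erase j) (some i) (some j) → False := by
          intro j hjM hjC _ hge
          have hij : i ≠ j := fun h => hiM (h ▸ hjM)
          have hMerase : ((assignedTo μ s).erase j).card < q s := by
            rw [Finset.card_erase_of_mem hjM]
            have h1 := hcap s
            have h2 : 1 ≤ (assignedTo μ s).card := Finset.card_pos.2 ⟨j, hjM⟩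
            omega
          have hstr : StrictP (ge s) ((assignedTo μ s).erase j) (some i) (some j) :=
            strict_of_ge (hanti s) hMerase
              (notInOpt_some (fun h => hiM (Finset.mem_of_mem_erase h)))
              (notInOpt_some (Finset.notMem_erase _ _))
              (by simp [hij]) hge
          have hjs : μ j = some s := by
            have := hjM
            simpa only [assignedTo, Finset.mem_filter, Finset.mem_univ, true_and]
              using this
          exact hFair ⟨i, j, s, hjs, hP, hstr⟩
        by_cases hsame : ∃ k ∈ assignedTo μ s,
            k ∉ C s (insert i (assignedTo μ s)) ∧ τ k = τ i
        · obtain ⟨j, hjM, hjC, hjτ⟩ := hsame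
          have hgeC := hcons1.1 j
            (Finset.mem_sdiff.2 ⟨Finset.mem_insert_of_mem hjM, hjC⟩)
          have hMerase : ((assignedTo μ s).erase j).card < q s := by
            rw [Finset.card_erase_of_mem hjM]
            have h1 := hcap s
            have h2 : 1 ≤ (assignedTo μ s).card := Finset.card_pos.2 ⟨j, hjM⟩
            omega
          have hge := (hWO s ((C s (insert i (assignedTo μ s))).erase i)
            ((assignedTo μ s).erase j) i j hCerase hMerase
            (Finset.notMem_erase _ _) (fun h => hjC (Finset.mem_of_mem_erase h))
            (fun h => hiM (Finset.mem_of_mem_erase h)) (Finset.notMem_erase _ _)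
            hjτ.symm).2 hgeC
          exact hmain j hjM hjC hgeC hge
        · obtain ⟨j, hjJ', hjC⟩ := Finset.exists_of_ssubset hss
          have hjM : j ∈ assignedTo μ s := by
            rcases Finset.mem_insert.1 hjJ' with rfl | h
            · exact absurd hiC hjC
            · exact h
          have hgeC := hcons1.1 j (Finset.mem_sdiff.2 ⟨hjJ', hjC⟩)
          have hMerase : ((assignedTo μ s).erase j).card < q s := by
            rw [Finset.card_erase_of_mem hjM]
            have h1 := hcap s
            have h2 : 1 ≤ (assignedTo μ s).card := Finset.card_pos.2 ⟨j, hjM⟩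
            omega
          have hCiM : (C s (insert i (assignedTo μ s))).erase i
              ⊆ (assignedTo μ s).erase j := by
            intro x hx
            obtain ⟨hxi, hxC⟩ := Finset.mem_erase.1 hx
            refine Finset.mem_erase.2 ⟨fun h => hjC (h ▸ hxC), ?_⟩
            rcases Finset.mem_insert.1 (hsub s _ hxC) with rfl | h
            · exact absurd rfl hxi
            · exact h
          -- type counts for τ i agree
          have htc : tcnt τ ((assignedTo μ s).erase j) (some i)
              ≤ tcnt τ ((C s (insert i (assignedTo μ s))).erase i) (some i) := by
            apply Finset.card_le_card
            intro x hx
            obtain ⟨hxM, hxτ⟩ := Finset.mem_filter.1 hx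
            obtain ⟨hxj, hxM'⟩ := Finset.mem_erase.1 hxM
            have hxC : x ∈ C s (insert i (assignedTo μ s)) := by
              by_contra hxC
              exact hsame ⟨x, hxM', hxC, hxτ⟩
            refine Finset.mem_filter.2 ⟨Finset.mem_erase.2 ⟨?_, hxC⟩, hxτ⟩
            intro h; exact hiM (h ▸ hxM')
          have hge := (hPD s ((C s (insert i (assignedTo μ s))).erase i)
            ((assignedTo μ s).erase j) (some i) (some j) hCerase hMerase
            (notInOpt_some (Finset.notMem_erase _ _))
            (notInOpt_some (fun h => hjC (Finset.mem_of_mem_erase h)))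
            (notInOpt_some (fun h => hiM (Finset.mem_of_mem_erase h)))
            (notInOpt_some (Finset.notMem_erase _ _))
            htc (tcnt_mono τ hCiM _)).2 hgeC
          exact hmain j hjM hjC hgeC hge
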